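/- The subgroup 𝒩 := ⟨A, B⟩ of GL(3,ℂ) generated by A := G₁·G₂²·G₁⁻¹ and B := G₁·G₂⁻²·G₁ is isomorphic as a group to (ℤ/9ℤ) × (ℤ/3ℤ). In particular 𝒩 is abelian of order 27. -/

import Mathlib

open Complex Matrix

/-- `t = (√2/2)·e^{2iπ/3}` -/
noncomputable def t : ℂ := ((Real.sqrt 2 : ℂ) / 2) * Complex.exp (2 * (Real.pi : ℂ) * Complex.I / 3)

/-- `G₁ = e^{iπ/9}·diag(2t̄², 2t², −2t̄²)` -/
noncomputable def G₁ : Matrix (Fin 3) (Fin 3) ℂ :=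
  Complex.exp ((Real.pi : ℂ) * Complex.I / 9) •
    Matrix.diagonal ![2 * (starRingEnd ℂ t) ^ 2, 2 * t ^ 2, -(2 * (starRingEnd ℂ t) ^ 2)]

/-- `G₂ = e^{iπ/9}·[[t², t, −t²], [t, 0, t], [−t², t, t²]]` -/
noncomputable def G₂ : Matrix (Fin 3) (Fin 3) ℂ :=
  Complex.exp ((Real.pi : ℂ) * Complex.I / 9) •
    !![t ^ 2, t, -t ^ 2; t, 0, t; -t ^ 2, t, t ^ 2]

noncomputable def u : ℂ := Complex.exp ((Real.pi : ℂ) * Complex.I / 9)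

lemma hu9 : u ^ 9 = -1 := by
  rw [u, ← Complex.exp_nat_mul, show (9:ℕ) * ((Real.pi : ℂ) * Complex.I / 9) = Real.pi * Complex.I by push_cast; ring, Complex.exp_pi_mul_I]

lemma hsqrt2 : ((Real.sqrt 2 : ℝ) : ℂ) ^ 2 = 2 := by
  rw [← Complex.ofReal_pow, Real.sq_sqrt (by norm_num : (0:ℝ) ≤ 2)]
  norm_num

lemma ht2u : t ^ 2 = u ^ 12 / 2 := by
  rw [t, mul_pow, div_pow, hsqrt2, ← Complex.exp_nat_mul, u, ← Complex.exp_nat_mul,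
    show (2:ℕ) * (2 * (Real.pi : ℂ) * Complex.I / 3) = (12:ℕ) * ((Real.pi : ℂ) * Complex.I / 9) by push_cast; ring]
  ring

lemma hs2u : (starRingEnd ℂ t) ^ 2 = u ^ 6 / 2 := by
  have hconj : (starRingEnd ℂ) t = ((Real.sqrt 2 : ℝ) : ℂ) / 2 * Complex.exp (-(2 * (Real.pi : ℂ) * Complex.I / 3)) := by
    rw [t, _root_.map_mul, ← Complex.exp_conj]
    congr 1
    · simp [map_div₀, map_ofNat, Complex.conj_ofReal]
    · congr 1
      simp [map_div₀, _root_.map_mul, map_ofNat, Complex.conj_I, Complex.conj_ofReal]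
      ring
  rw [hconj, mul_pow, div_pow, hsqrt2, ← Complex.exp_nat_mul]
  have : Complex.exp ((2:ℕ) * -(2 * (Real.pi : ℂ) * Complex.I / 3)) = u ^ 6 := by
    rw [u, ← Complex.exp_nat_mul]
    rw [show ((6:ℕ) * ((Real.pi : ℂ) * Complex.I / 9)) = (2:ℕ) * -(2 * (Real.pi : ℂ) * Complex.I / 3) + 2 * Real.pi * Complex.I by push_cast; ring]
    rw [Complex.exp_add, Complex.exp_two_pi_mul_I, mul_one]
  rw [this]; ring

lemma u_pow_dvd {k : ℕ} (h : u ^ k = 1) : 18 ∣ k := by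
  rw [u, ← Complex.exp_nat_mul, Complex.exp_eq_one_iff] at h
  obtain ⟨n, hn⟩ := h
  have hπ : (Real.pi : ℂ) ≠ 0 := by exact_mod_cast Real.pi_ne_zero
  have hI := Complex.I_ne_zero
  have hk : (k : ℂ) = ((18 * n : ℤ) : ℂ) := by
    push_cast
    have h2 : (k:ℂ) * ((Real.pi:ℂ) * Complex.I) = (18 * n) * ((Real.pi:ℂ) * Complex.I) := by
      linear_combination 9 * hn
    exact mul_right_cancel₀ (mul_ne_zero hπ hI) h2
  have : (k : ℤ) = 18 * n := by exact_mod_cast hk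
  exact ⟨n.natAbs, by omega⟩

noncomputable def blkuv (U V m : ℂ) : Matrix (Fin 3) (Fin 3) ℂ :=
  !![(U + V)/2, 0, (U - V)/2; 0, m, 0; (U - V)/2, 0, (U + V)/2]

lemma blkuv_mul (U V m U' V' m' : ℂ) :
    blkuv U V m * blkuv U' V' m' = blkuv (U * U') (V * V') (m * m') := by
  ext i j
  fin_cases i <;> fin_cases j <;>
    simp [blkuv, Matrix.mul_apply, Fin.sum_univ_three] <;> ring

lemma blkuv_pow (U V m : ℂ) (k : ℕ) :
    (blkuv U V m) ^ k = blkuv (U ^ k) (V ^ k) (m ^ k) := by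
  induction k with
  | zero =>
      ext i j
      fin_cases i <;> fin_cases j <;>
        simp [blkuv, Matrix.one_apply, Matrix.vecHead, Matrix.vecTail] <;> norm_num
  | succ n ih => rw [pow_succ, ih, blkuv_mul, ← pow_succ, ← pow_succ, ← pow_succ]

lemma blkuv_eq_one {U V m : ℂ} (h : blkuv U V m = 1) : U = 1 ∧ V = 1 ∧ m = 1 := by
  have h00 := congrFun (congrFun h 0) 0
  have h02 := congrFun (congrFun h 0) 2
  have h11 := congrFun (congrFun h 1) 1
  simp [blkuv, Matrix.one_apply] at h00 h02 h11
  exact ⟨by linear_combination h00 + h02 / 2, by linear_combination h00 - h02 / 2, h11⟩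

lemma hG1 : G₁ = !![u^7, 0, 0; 0, u^13, 0; 0, 0, -u^7] := by
  have hu' : Complex.exp ((Real.pi : ℂ) * Complex.I / 9) = u := rfl
  unfold G₁
  rw [hu']
  ext i j
  fin_cases i <;> fin_cases j <;>
    simp [Matrix.diagonal, Matrix.vecHead, Matrix.vecTail]
  · linear_combination (2 * u) * hs2u
  · linear_combination (2 * u) * ht2u
  · linear_combination (2 * u) * hs2u

set_option maxHeartbeats 2000000 in
lemma hM1 : G₁ * (G₂ * G₂) = blkuv (u^8) (u^14) (u^14) * G₁ := by
  have hu' : Complex.exp ((Real.pi : ℂ) * Complex.I / 9) = u := rfl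
  rw [hG1]
  unfold G₂
  rw [hu']
  ext i j
  fin_cases i <;> fin_cases j <;>
    simp [blkuv, Matrix.mul_apply, Fin.sum_univ_three, Matrix.vecHead, Matrix.vecTail]
  all_goals (try ring)
  · linear_combination ((u^24 - u^15)/2) * hu9 + (2*u^9*t^2 + u^9 + u^21) * ht2u
  · linear_combination ((u^15 - u^24)/2) * hu9 + (-2*u^9*t^2 + u^9 - u^21) * ht2u
  · linear_combination (2*u^15) * ht2u
  · linear_combination ((u^24 - u^15)/2) * hu9 + (2*u^9*t^2 - u^9 + u^21) * ht2u
  · linear_combination ((u^24 - u^15)/2) * hu9 + (2*u^9*t^2 + u^9 + u^21) * ht2u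

lemma hM2 : G₁ * G₁ = blkuv (u^14) (u^14) (u^8) := by
  rw [hG1]
  ext i j
  fin_cases i <;> fin_cases j <;>
    simp [blkuv, Matrix.mul_apply, Fin.sum_univ_three, Matrix.vecHead, Matrix.vecTail]
  all_goals (try ring)
  · linear_combination (u^17 - u^8) * hu9

lemma blkuv_one : blkuv 1 1 1 = 1 := by
  ext i j
  fin_cases i <;> fin_cases j <;>
    simp [blkuv, Matrix.one_apply, Matrix.vecHead, Matrix.vecTail] <;> norm_num

lemma hu18 : u ^ 18 = 1 := by
  have : u ^ 18 = (u ^ 9) ^ 2 := by ring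
  rw [this, hu9]; norm_num

lemma aux (a b : GL (Fin 3) ℂ)
    (ha : (a : Matrix (Fin 3) (Fin 3) ℂ) = blkuv (u^8) (u^14) (u^14))
    (hb : (b : Matrix (Fin 3) (Fin 3) ℂ) = blkuv (u^6) 1 (u^12)) :
    Nonempty ((Subgroup.closure {a, b} : Subgroup (GL (Fin 3) ℂ))
        ≃* Multiplicative (ZMod 9) × Multiplicative (ZMod 3)) ∧
    (∀ x ∈ Subgroup.closure {a, b}, ∀ y ∈ Subgroup.closure {a, b}, x * y = y * x) ∧
    Nat.card (Subgroup.closure {a, b} : Subgroup (GL (Fin 3) ℂ)) = 27 := by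
  have hcomm : a * b = b * a := by
    apply Units.ext
    rw [Units.val_mul, Units.val_mul, ha, hb, blkuv_mul, blkuv_mul]
    ring_nf
  have ha9 : a ^ 9 = 1 := by
    apply Units.ext
    rw [Units.val_pow_eq_pow_val, ha, blkuv_pow, Units.val_one,
      show ((u^8)^9 : ℂ) = (u^18)^4 by ring, show ((u^14)^9 : ℂ) = (u^18)^7 by ring, hu18]
    norm_num
    exact blkuv_one
  have hb3 : b ^ 3 = 1 := by
    apply Units.ext
    rw [Units.val_pow_eq_pow_val, hb, blkuv_pow, Units.val_one,
      show ((u^6)^3 : ℂ) = (u^18) by ring, show ((u^12)^3 : ℂ) = (u^18)^2 by ring, hu18]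
    norm_num
    exact blkuv_one
  have hK : ∀ m n : ℕ, a ^ m * b ^ n = 1 → 9 ∣ m ∧ 3 ∣ n := by
    intro m n h
    have hv : blkuv (u^(8*m) * u^(6*n)) ((u^(14*m)) * 1) (u^(14*m) * u^(12*n)) = 1 := by
      have h2 := congrArg (fun x : GL (Fin 3) ℂ => (x : Matrix (Fin 3) (Fin 3) ℂ)) h
      simp only [Units.val_mul, Units.val_pow_eq_pow_val, ha, hb, Units.val_one,
        blkuv_pow, blkuv_mul, one_pow, ← pow_mul] at h2
      exact h2
    obtain ⟨hU, hV, _⟩ := blkuv_eq_one hv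
    rw [mul_one] at hV
    rw [← pow_add] at hU
    have d1 := u_pow_dvd hV
    have d2 := u_pow_dvd hU
    omega
  -- reduction of exponents
  have hpa : ∀ k : ℕ, a ^ (k % 9) = a ^ k := by
    intro k
    conv_rhs => rw [← Nat.div_add_mod k 9]
    rw [pow_add, pow_mul, ha9, one_pow, one_mul]
  have hpb : ∀ k : ℕ, b ^ (k % 3) = b ^ k := by
    intro k
    conv_rhs => rw [← Nat.div_add_mod k 3]
    rw [pow_add, pow_mul, hb3, one_pow, one_mul]
  have hc : Commute a b := hcomm
  -- the homomorphism
  let φ : Multiplicative (ZMod 9) × Multiplicative (ZMod 3) →* GL (Fin 3) ℂ :=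
    { toFun := fun p => a ^ (p.1.toAdd.val) * b ^ (p.2.toAdd.val)
      map_one' := by simp
      map_mul' := by
        rintro ⟨x1, x2⟩ ⟨y1, y2⟩
        simp only [Prod.fst_mul, Prod.snd_mul, toAdd_mul]
        rw [ZMod.val_add, ZMod.val_add, hpa, hpb, pow_add, pow_add]
        rw [(hc.symm.pow_pow x2.toAdd.val y1.toAdd.val).mul_mul_mul_comm, mul_assoc]
      }
  have hφ : ∀ p : Multiplicative (ZMod 9) × Multiplicative (ZMod 3),
      φ p = a ^ (p.1.toAdd.val) * b ^ (p.2.toAdd.val) := fun _ => rfl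
  have hrange : φ.range = Subgroup.closure {a, b} := by
    apply le_antisymm
    · rintro x ⟨⟨p1, p2⟩, rfl⟩
      exact mul_mem (pow_mem (Subgroup.subset_closure (by simp)) _)
        (pow_mem (Subgroup.subset_closure (by simp)) _)
    · rw [Subgroup.closure_le]
      rintro x (rfl | rfl)
      · refine ⟨(Multiplicative.ofAdd (1 : ZMod 9), 1), ?_⟩
        rw [hφ]
        norm_num [show ((1 : ZMod 9)).val = 1 from rfl, show ((0 : ZMod 3)).val = 0 from rfl]
      · refine ⟨(1, Multiplicative.ofAdd (1 : ZMod 3)), ?_⟩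
        rw [hφ]
        norm_num [show ((1 : ZMod 3)).val = 1 from rfl, show ((0 : ZMod 9)).val = 0 from rfl]
  have hinj : Function.Injective φ := by
    rw [injective_iff_map_eq_one]
    rintro ⟨p1, p2⟩ h
    rw [hφ] at h
    obtain ⟨h9, h3⟩ := hK _ _ h
    dsimp only at h9 h3
    have hv1 : p1.toAdd.val < 9 := ZMod.val_lt _
    have hv2 : p2.toAdd.val < 3 := ZMod.val_lt _
    have e1 : p1.toAdd.val = 0 := by omega
    have e2 : p2.toAdd.val = 0 := by omega
    have : p1.toAdd = 0 := by rwa [← ZMod.val_eq_zero]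
    have h1' : p1 = 1 := by
      apply Multiplicative.toAdd.injective
      simpa using this
    have : p2.toAdd = 0 := by rwa [← ZMod.val_eq_zero]
    have h2' : p2 = 1 := by
      apply Multiplicative.toAdd.injective
      simpa using this
    rw [Prod.ext_iff]
    exact ⟨h1', h2'⟩
  have e0 := MulEquiv.subgroupCongr hrange
  have e1 := MonoidHom.ofInjective hinj
  have e : (Subgroup.closure {a, b} : Subgroup (GL (Fin 3) ℂ))
      ≃* Multiplicative (ZMod 9) × Multiplicative (ZMod 3) :=
    ((e1.trans e0).symm)
  refine ⟨⟨e⟩, ?_, ?_⟩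
  · intro x hx y hy
    rw [← hrange] at hx hy
    obtain ⟨p, rfl⟩ := hx
    obtain ⟨q, rfl⟩ := hy
    rw [← MonoidHom.map_mul φ, ← MonoidHom.map_mul φ, mul_comm p q]
  · have := Nat.card_congr e.toEquiv
    rw [this]
    rw [Nat.card_prod, Nat.card_congr (Multiplicative.toAdd (α := ZMod 9)),
      Nat.card_congr (Multiplicative.toAdd (α := ZMod 3)), Nat.card_zmod, Nat.card_zmod]

theorem stmt11 (g₁ g₂ : GL (Fin 3) ℂ)
    (hg₁ : (g₁ : Matrix (Fin 3) (Fin 3) ℂ) = G₁)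
    (hg₂ : (g₂ : Matrix (Fin 3) (Fin 3) ℂ) = G₂) :
    Nonempty ((Subgroup.closure {g₁ * g₂ ^ 2 * g₁⁻¹, g₁ * g₂⁻¹ ^ 2 * g₁} : Subgroup (GL (Fin 3) ℂ))
        ≃* Multiplicative (ZMod 9) × Multiplicative (ZMod 3)) ∧
    (∀ x ∈ Subgroup.closure {g₁ * g₂ ^ 2 * g₁⁻¹, g₁ * g₂⁻¹ ^ 2 * g₁},
      ∀ y ∈ Subgroup.closure {g₁ * g₂ ^ 2 * g₁⁻¹, g₁ * g₂⁻¹ ^ 2 * g₁}, x * y = y * x) ∧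
    Nat.card (Subgroup.closure {g₁ * g₂ ^ 2 * g₁⁻¹, g₁ * g₂⁻¹ ^ 2 * g₁} : Subgroup (GL (Fin 3) ℂ))
      = 27 := by
  have hg2sq : ((g₂ ^ 2 : GL (Fin 3) ℂ) : Matrix (Fin 3) (Fin 3) ℂ) = G₂ * G₂ := by
    rw [Units.val_pow_eq_pow_val, hg₂, sq]
  have hG₁inv : G₁ * ((g₁⁻¹ : GL (Fin 3) ℂ) : Matrix (Fin 3) (Fin 3) ℂ) = 1 := by
    rw [← hg₁, ← Units.val_mul, mul_inv_cancel, Units.val_one]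
  have ha : ((g₁ * g₂ ^ 2 * g₁⁻¹ : GL (Fin 3) ℂ) : Matrix (Fin 3) (Fin 3) ℂ)
      = blkuv (u^8) (u^14) (u^14) := by
    simp only [Units.val_mul, hg₁]
    rw [hg2sq, hM1, mul_assoc, hG₁inv, mul_one]
  have hainv : (((g₁ * g₂ ^ 2 * g₁⁻¹)⁻¹ : GL (Fin 3) ℂ) : Matrix (Fin 3) (Fin 3) ℂ)
      * ((g₁ * g₂ ^ 2 * g₁⁻¹ : GL (Fin 3) ℂ) : Matrix (Fin 3) (Fin 3) ℂ) = 1 := by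
    rw [← Units.val_mul, inv_mul_cancel, Units.val_one]
  have hb : ((g₁ * g₂⁻¹ ^ 2 * g₁ : GL (Fin 3) ℂ) : Matrix (Fin 3) (Fin 3) ℂ)
      = blkuv (u^6) 1 (u^12) := by
    have h2 : ((g₁ * g₂ ^ 2 * g₁⁻¹ : GL (Fin 3) ℂ) : Matrix (Fin 3) (Fin 3) ℂ)
        * ((g₁ * g₂⁻¹ ^ 2 * g₁ : GL (Fin 3) ℂ) : Matrix (Fin 3) (Fin 3) ℂ)
        = ((g₁ * g₂ ^ 2 * g₁⁻¹ : GL (Fin 3) ℂ) : Matrix (Fin 3) (Fin 3) ℂ)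
          * blkuv (u^6) 1 (u^12) := by
      calc ((g₁ * g₂ ^ 2 * g₁⁻¹ : GL (Fin 3) ℂ) : Matrix (Fin 3) (Fin 3) ℂ)
            * ((g₁ * g₂⁻¹ ^ 2 * g₁ : GL (Fin 3) ℂ) : Matrix (Fin 3) (Fin 3) ℂ)
          = (((g₁ * g₂ ^ 2 * g₁⁻¹) * (g₁ * g₂⁻¹ ^ 2 * g₁) : GL (Fin 3) ℂ) : Matrix (Fin 3) (Fin 3) ℂ) :=
            (Units.val_mul _ _).symm
        _ = ((g₁ * g₁ : GL (Fin 3) ℂ) : Matrix (Fin 3) (Fin 3) ℂ) := by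
            rw [show (g₁ * g₂ ^ 2 * g₁⁻¹) * (g₁ * g₂⁻¹ ^ 2 * g₁) = g₁ * g₁ by group]
        _ = ((g₁ : GL (Fin 3) ℂ) : Matrix (Fin 3) (Fin 3) ℂ) * ((g₁ : GL (Fin 3) ℂ) : Matrix (Fin 3) (Fin 3) ℂ) := Units.val_mul _ _
        _ = G₁ * G₁ := by rw [hg₁]
        _ = blkuv (u^14) (u^14) (u^8) := hM2
        _ = ((g₁ * g₂ ^ 2 * g₁⁻¹ : GL (Fin 3) ℂ) : Matrix (Fin 3) (Fin 3) ℂ)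
            * blkuv (u^6) 1 (u^12) := by
            rw [ha, blkuv_mul, show u^8 * u^6 = u^14 by ring, mul_one,
              show u^14 * u^12 = u^8 by linear_combination (u^17 - u^8) * hu9]
    calc ((g₁ * g₂⁻¹ ^ 2 * g₁ : GL (Fin 3) ℂ) : Matrix (Fin 3) (Fin 3) ℂ)
        = (((g₁ * g₂ ^ 2 * g₁⁻¹)⁻¹ : GL (Fin 3) ℂ) : Matrix (Fin 3) (Fin 3) ℂ)
          * (((g₁ * g₂ ^ 2 * g₁⁻¹ : GL (Fin 3) ℂ) : Matrix (Fin 3) (Fin 3) ℂ)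
            * ((g₁ * g₂⁻¹ ^ 2 * g₁ : GL (Fin 3) ℂ) : Matrix (Fin 3) (Fin 3) ℂ)) := by
          rw [← mul_assoc, hainv, one_mul]
      _ = (((g₁ * g₂ ^ 2 * g₁⁻¹)⁻¹ : GL (Fin 3) ℂ) : Matrix (Fin 3) (Fin 3) ℂ)
          * (((g₁ * g₂ ^ 2 * g₁⁻¹ : GL (Fin 3) ℂ) : Matrix (Fin 3) (Fin 3) ℂ)
            * blkuv (u^6) 1 (u^12)) := by rw [h2]
      _ = blkuv (u^6) 1 (u^12) := by rw [← mul_assoc, hainv, one_mul]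
  exact aux _ _ ha hb
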